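/- arXiv:2605.26899 — 5 statements merged into one kernel-verified Lean document; each statement's English description precedes it below -/
import Mathlib

section
/- Let 𝓗 be a complex Hilbert space, B : ℝ → (𝓗 →L[ℂ] 𝓗) continuous with B t self-adjoint for every t, and r : ℝ → 𝓗 continuous. If e : ℝ → 𝓗 is differentiable with e'(t) = −i • ( (B t)(e t) + r t ) for all t and e s = 0, then for every t ≥ s, ‖e t‖ ≤ ∫_s^t ‖r τ‖ dτ. -/
open Filter Topology intervalIntegral

/-- **Energy estimate for the inhomogeneous Schr\u00f6dinger equation.**
If `B t` are bounded self-adjoint operators depending continuously on `t`,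
`r` is continuous, and `e` solves `e' = -i (B(t) e + r(t))` with `e s = 0`,
then `‖e t‖ ≤ ∫_s^t ‖r τ‖ dτ` for `t ≥ s`. -/
theorem energy_estimate_inhomogeneous
    {𝓗 : Type*} [NormedAddCommGroup 𝓗] [InnerProductSpace ℂ 𝓗] [CompleteSpace 𝓗]
    (B : ℝ → 𝓗 →L[ℂ] 𝓗) (hB : Continuous B)
    (hsa : ∀ t, IsSelfAdjoint (B t))
    (r : ℝ → 𝓗) (hr : Continuous r)
    (e : ℝ → 𝓗) (s : ℝ)
    (he : ∀ t, HasDerivAt e ((-Complex.I) • ((B t) (e t) + r t)) t)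
    (hes : e s = 0) :
    ∀ t, s ≤ t → ‖e t‖ ≤ ∫ τ in s..t, ‖r τ‖ := by
  intro t hst
  have heC : Continuous e := by
    refine continuous_iff_continuousAt.2 fun x => (he x).continuousAt
  set e' : ℝ → 𝓗 := fun τ => (-Complex.I) • ((B τ) (e τ) + r τ) with he'def
  have he'C : Continuous e' := by
    exact Continuous.const_smul ((hB.clm_apply heC).add hr) _
  -- the pointwise bound on re ⟪e τ, e' τ⟫
  have key : ∀ τ, (inner ℂ (e τ) (e' τ) : ℂ).re ≤ ‖r τ‖ * ‖e τ‖ := by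
    intro τ
    have hBe : (inner ℂ (e τ) ((B τ) (e τ)) : ℂ).im = 0 := by
      have h1 : (starRingEnd ℂ) (inner ℂ (e τ) ((B τ) (e τ)) : ℂ)
          = inner ℂ (e τ) ((B τ) (e τ)) := by
        rw [inner_conj_symm]
        conv_lhs => rw [← (hsa τ).adjoint_eq]
        rw [ContinuousLinearMap.adjoint_inner_left]
      exact Complex.conj_eq_iff_im.mp h1
    have : (inner ℂ (e τ) (e' τ) : ℂ) =
        (-Complex.I) * ((inner ℂ (e τ) ((B τ) (e τ)) : ℂ) + inner ℂ (e τ) (r τ)) := by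
      simp only [he'def, inner_smul_right, inner_add_right]
    rw [this]
    have hre : ((-Complex.I) * ((inner ℂ (e τ) ((B τ) (e τ)) : ℂ) + inner ℂ (e τ) (r τ))).re
        = (inner ℂ (e τ) (r τ) : ℂ).im := by
      simp [Complex.mul_re, hBe]
    rw [hre]
    calc (inner ℂ (e τ) (r τ) : ℂ).im ≤ ‖(inner ℂ (e τ) (r τ) : ℂ)‖ := by
          exact (Complex.abs_im_le_norm _).trans_eq rfl |>.trans' (le_abs_self _)
      _ ≤ ‖e τ‖ * ‖r τ‖ := norm_inner_le_norm _ _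
      _ = ‖r τ‖ * ‖e τ‖ := mul_comm _ _
  -- ε trick
  have main : ∀ ε : ℝ, 0 < ε → ‖e t‖ ≤ (∫ τ in s..t, ‖r τ‖) + ε := by
    intro ε hε
    set u : ℝ → ℝ := fun τ => ‖e τ‖ ^ 2 with hu_def
    have hu : ∀ τ, HasDerivAt u (2 * (inner ℂ (e τ) (e' τ) : ℂ).re) τ := by
      intro τ
      have h1 : HasDerivAt (fun x => (inner ℂ (e x) (e x) : ℂ))
          ((inner ℂ (e τ) (e' τ) : ℂ) + inner ℂ (e' τ) (e τ)) τ :=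
        HasDerivAt.inner ℂ (he τ) (he τ)
      have h2 : HasDerivAt (fun x => ((inner ℂ (e x) (e x) : ℂ)).re)
          (((inner ℂ (e τ) (e' τ) : ℂ) + inner ℂ (e' τ) (e τ)).re) τ :=
        Complex.reCLM.hasFDerivAt.comp_hasDerivAt τ h1
      have heq : ∀ x, ((inner ℂ (e x) (e x) : ℂ)).re = u x := by
        intro x; rw [hu_def]; exact_mod_cast inner_self_eq_norm_sq (𝕜 := ℂ) (e x)
      have hval : (((inner ℂ (e τ) (e' τ) : ℂ) + inner ℂ (e' τ) (e τ)).re)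
          = 2 * (inner ℂ (e τ) (e' τ) : ℂ).re := by
        rw [← inner_conj_symm (e' τ) (e τ), Complex.add_re, Complex.conj_re]
        ring
      rw [← hval]
      exact (funext heq ▸ h2)
    set v : ℝ → ℝ := fun τ => Real.sqrt (u τ + ε ^ 2) with hv_def
    have hupos : ∀ τ, 0 < u τ + ε ^ 2 := fun τ =>
      add_pos_of_nonneg_of_pos (sq_nonneg _) (pow_pos hε 2)
    set v' : ℝ → ℝ := fun τ =>
      2 * (inner ℂ (e τ) (e' τ) : ℂ).re / (2 * Real.sqrt (u τ + ε ^ 2)) with hv'_def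
    have hv : ∀ τ, HasDerivAt v (v' τ) τ := fun τ =>
      ((hu τ).add_const (ε ^ 2)).sqrt (ne_of_gt (hupos τ))
    have hinnerC : Continuous fun τ => (inner ℂ (e τ) (e' τ) : ℂ).re :=
      Complex.continuous_re.comp (continuous_inner.comp (heC.prodMk he'C))
    have hv'C : Continuous v' := by
      apply Continuous.div
      · exact continuous_const.mul hinnerC
      · exact continuous_const.mul
          (Real.continuous_sqrt.comp (((heC.norm.pow 2)).add continuous_const))
      · intro τ
        have := Real.sqrt_pos.2 (hupos τ)
        positivity
    -- v' τ ≤ ‖r τ‖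
    have hbound : ∀ τ, v' τ ≤ ‖r τ‖ := by
      intro τ
      have hs0 : 0 < Real.sqrt (u τ + ε ^ 2) := Real.sqrt_pos.2 (hupos τ)
      have hle : ‖e τ‖ ≤ Real.sqrt (u τ + ε ^ 2) := by
        rw [show ‖e τ‖ = Real.sqrt (‖e τ‖ ^ 2) from (Real.sqrt_sq (norm_nonneg _)).symm]
        exact Real.sqrt_le_sqrt (by simp [hu_def]; positivity)
      rw [hv'_def]
      rw [div_le_iff₀ (by positivity)]
      calc 2 * (inner ℂ (e τ) (e' τ) : ℂ).re ≤ 2 * (‖r τ‖ * ‖e τ‖) := by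
            have := key τ; linarith
        _ ≤ 2 * (‖r τ‖ * Real.sqrt (u τ + ε ^ 2)) := by
            have : ‖r τ‖ * ‖e τ‖ ≤ ‖r τ‖ * Real.sqrt (u τ + ε ^ 2) :=
              mul_le_mul_of_nonneg_left hle (norm_nonneg _)
            linarith
        _ = ‖r τ‖ * (2 * Real.sqrt (u τ + ε ^ 2)) := by ring
    have hftc : (∫ τ in s..t, v' τ) = v t - v s :=
      intervalIntegral.integral_eq_sub_of_hasDerivAt (fun τ _ => hv τ)
        (hv'C.intervalIntegrable s t)
    have hmono : (∫ τ in s..t, v' τ) ≤ ∫ τ in s..t, ‖r τ‖ :=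
      intervalIntegral.integral_mono_on hst (hv'C.intervalIntegrable s t)
        (hr.norm.intervalIntegrable s t) (fun τ _ => hbound τ)
    have hvs : v s = ε := by
      simp [hv_def, hu_def, hes, Real.sqrt_sq hε.le]
    have het : ‖e t‖ ≤ v t := by
      rw [show ‖e t‖ = Real.sqrt (‖e t‖ ^ 2) from (Real.sqrt_sq (norm_nonneg _)).symm]
      exact Real.sqrt_le_sqrt (by simp [hu_def]; positivity)
    calc ‖e t‖ ≤ v t := het
      _ = v s + ∫ τ in s..t, v' τ := by rw [hftc]; ring
      _ ≤ (∫ τ in s..t, ‖r τ‖) + ε := by rw [hvs]; linarith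
  by_contra hcon
  push_neg at hcon
  have hεpos : 0 < (‖e t‖ - ∫ τ in s..t, ‖r τ‖) / 2 := by linarith
  have := main _ hεpos
  linarith
end

section
/- Let 𝓗 be a complex Hilbert space, let P : 𝓗 →L[ℂ] 𝓗 be an orthogonal projection (self-adjoint with P ∘ P = P), and let A : ℝ → (𝓗 →L[ℂ] 𝓗) be continuous with A t self-adjoint for every t. Suppose u : ℝ → 𝓗 is differentiable with u'(t) = −i • (A t)(u t) for all t, and v : ℝ → 𝓗 is differentiable with v'(t) = −i • (P ∘L (A t) ∘L P)(v t) for all t and v s = P (u s). Then for every t ≥ s, ‖P (u t) − v t‖ ≤ ∫_s^t ‖(A τ) ((1 − P)(u τ))‖ dτ. -/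
open Filter Topology intervalIntegral

section aux
variable {𝓗 : Type*} [NormedAddCommGroup 𝓗] [InnerProductSpace ℂ 𝓗] [CompleteSpace 𝓗]

local notation "⟪" x ", " y "⟫" => @inner ℂ _ _ x y

lemma proj_norm_le (P : 𝓗 →L[ℂ] 𝓗) (hPsa : IsSelfAdjoint P) (hPidem : P ∘L P = P)
    (x : 𝓗) : ‖P x‖ ≤ ‖x‖ := by
  have hsym : (P : 𝓗 →ₗ[ℂ] 𝓗).IsSymmetric :=
    ContinuousLinearMap.isSelfAdjoint_iff_isSymmetric.mp hPsa
  have h2 : P (P x) = P x := by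
    have := congrArg (fun T => T x) hPidem
    simpa using this
  have h1 : ⟪P x, P x⟫ = ⟪x, P x⟫ := by
    have h := hsym x (P x)
    simp only [ContinuousLinearMap.coe_coe] at h
    rw [h, h2]
  have h3 : ‖P x‖ ^ 2 ≤ ‖x‖ * ‖P x‖ := by
    have e1 : ‖(⟪P x, P x⟫ : ℂ)‖ = ‖P x‖ ^ 2 := by
      rw [inner_self_eq_norm_sq_to_K (𝕜 := ℂ)]
      simp [norm_pow]
    calc ‖P x‖ ^ 2 = ‖(⟪P x, P x⟫ : ℂ)‖ := e1.symm
      _ = ‖(⟪x, P x⟫ : ℂ)‖ := by rw [h1]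
      _ ≤ ‖x‖ * ‖P x‖ := norm_inner_le_norm x (P x)
  rcases eq_or_lt_of_le (norm_nonneg (P x)) with h | h
  · rw [← h]; exact norm_nonneg x
  · nlinarith

lemma symm_inner_im_zero {B : 𝓗 →L[ℂ] 𝓗} (hB : IsSelfAdjoint B) (x : 𝓗) :
    (⟪x, B x⟫ : ℂ).im = 0 := by
  have hsym : (B : 𝓗 →ₗ[ℂ] 𝓗).IsSymmetric :=
    ContinuousLinearMap.isSelfAdjoint_iff_isSymmetric.mp hB
  have h := hsym x x
  simp only [ContinuousLinearMap.coe_coe] at h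
  have h1 : (starRingEnd ℂ) ⟪x, B x⟫ = ⟪x, B x⟫ := by
    rw [inner_conj_symm, h]
  exact Complex.conj_eq_iff_im.mp h1

end aux

/-- **Duhamel comparison for the cut-off dynamics.**
Let `P` be an orthogonal projection on a complex Hilbert space `𝓗` and `A`
a norm-continuous family of bounded self-adjoint operators.  If `u` solves
`u' = -i A(t) u` and `v` solves the cut-off equation `v' = -i (P A(t) P) v`
with `v s = P (u s)`, then for `t ≥ s`,
`‖P (u t) - v t‖ ≤ ∫_s^t ‖A(τ) ((1 - P)(u τ))‖ dτ`. -/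
theorem duhamel_cutoff_comparison
    {𝓗 : Type*} [NormedAddCommGroup 𝓗] [InnerProductSpace ℂ 𝓗] [CompleteSpace 𝓗]
    (P : 𝓗 →L[ℂ] 𝓗) (hPsa : IsSelfAdjoint P) (hPidem : P ∘L P = P)
    (A : ℝ → 𝓗 →L[ℂ] 𝓗) (hA : Continuous A)
    (hsa : ∀ t, IsSelfAdjoint (A t))
    (u v : ℝ → 𝓗) (s : ℝ)
    (hu : ∀ t, HasDerivAt u ((-Complex.I) • (A t) (u t)) t)
    (hv : ∀ t, HasDerivAt v ((-Complex.I) • (P ∘L (A t) ∘L P) (v t)) t)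
    (hvs : v s = P (u s)) :
    ∀ t, s ≤ t →
      ‖P (u t) - v t‖ ≤ ∫ τ in s..t, ‖(A τ) ((1 - P) (u τ))‖ := by
  set w : ℝ → 𝓗 := fun t => P (u t) - v t with hw_def
  set f : ℝ → 𝓗 := fun t => (A t) ((1 - P) (u t)) with hf_def
  set B : ℝ → 𝓗 →L[ℂ] 𝓗 := fun t => P ∘L (A t) ∘L P with hB_def
  set W : ℝ → 𝓗 := fun t => (-Complex.I) • ((B t) (w t) + P (f t)) with hW_def
  set D : ℝ → ℝ := fun t => (inner (𝕜 := ℂ) (w t) (W t) : ℂ).re with hD_def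
  have hPP : ∀ x : 𝓗, P (P x) = P x := fun x => by
    have := congrArg (fun T => T x) hPidem; simpa using this
  have hBsa : ∀ t, IsSelfAdjoint (B t) := by
    intro t
    have h := (hsa t).conjugate_self hPsa
    simpa [hB_def, ContinuousLinearMap.mul_def, ContinuousLinearMap.comp_assoc] using h
  -- continuity
  have hu_cont : Continuous u := by
    rw [continuous_iff_continuousAt]
    exact fun t => (hu t).differentiableAt.continuousAt
  have hf_cont : Continuous fun t => ‖f t‖ := by
    apply Continuous.norm
    exact hA.clm_apply (((1 - P : 𝓗 →L[ℂ] 𝓗).continuous).comp hu_cont)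
  -- derivative of w
  have hw_deriv : ∀ t, HasDerivAt w (W t) t := by
    intro t
    have h1 : HasDerivAt (fun t => P (u t)) (P ((-Complex.I) • (A t) (u t))) t :=
      (P.restrictScalars ℝ).hasFDerivAt.comp_hasDerivAt t (hu t)
    have h2 := h1.sub (hv t)
    convert h2 using 1
    case e'_8 => rfl
    simp only [hW_def, hB_def, hf_def, hw_def, map_smul, map_sub, map_add,
      ContinuousLinearMap.comp_apply, ContinuousLinearMap.sub_apply,
      ContinuousLinearMap.one_apply, smul_sub]
    rw [← smul_sub]
    congr 1
    rw [hPP]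
    abel
  -- inner product bound
  have hkey : ∀ t, D t ≤ ‖f t‖ * ‖w t‖ := by
    intro t
    have hDt : D t = (inner (𝕜 := ℂ) (w t) (W t) : ℂ).re := rfl
    have heq : (inner (𝕜 := ℂ) (w t) (W t) : ℂ)
        = -Complex.I * ((inner (𝕜 := ℂ) (w t) ((B t) (w t)) : ℂ)
            + (inner (𝕜 := ℂ) (w t) (P (f t)) : ℂ)) := by
      simp only [hW_def]
      rw [inner_smul_right, inner_add_right]
    rw [hDt, heq]
    have him : (inner (𝕜 := ℂ) (w t) ((B t) (w t)) : ℂ).im = 0 :=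
      symm_inner_im_zero (hBsa t) (w t)
    have hb : ((-Complex.I * ((inner (𝕜 := ℂ) (w t) ((B t) (w t)) : ℂ)
            + (inner (𝕜 := ℂ) (w t) (P (f t)) : ℂ))).re)
        = (inner (𝕜 := ℂ) (w t) (P (f t)) : ℂ).im := by
      simp [Complex.mul_re, Complex.add_im, him]
    rw [hb]
    calc (inner (𝕜 := ℂ) (w t) (P (f t)) : ℂ).im
        ≤ ‖(inner (𝕜 := ℂ) (w t) (P (f t)) : ℂ)‖ := by
          exact Complex.im_le_norm _
      _ ≤ ‖w t‖ * ‖P (f t)‖ := norm_inner_le_norm _ _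
      _ ≤ ‖w t‖ * ‖f t‖ := by
          gcongr; exact proj_norm_le P hPsa hPidem (f t)
      _ = ‖f t‖ * ‖w t‖ := mul_comm _ _
  -- squared norm derivative
  have hg_deriv : ∀ t, HasDerivAt (fun t => ‖w t‖ ^ 2) (2 * D t) t := by
    intro t
    have h1 : HasDerivAt (fun t => (inner (𝕜 := ℂ) (w t) (w t) : ℂ))
        ((inner (𝕜 := ℂ) (w t) (W t) : ℂ) + (inner (𝕜 := ℂ) (W t) (w t) : ℂ)) t :=
      HasDerivAt.inner ℂ (hw_deriv t) (hw_deriv t)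
    have h2 : HasDerivAt (fun t => (inner (𝕜 := ℂ) (w t) (w t) : ℂ).re)
        (((inner (𝕜 := ℂ) (w t) (W t) : ℂ) + (inner (𝕜 := ℂ) (W t) (w t) : ℂ)).re) t :=
      Complex.reCLM.hasFDerivAt.comp_hasDerivAt t h1
    have h3 : (fun t => (inner (𝕜 := ℂ) (w t) (w t) : ℂ).re) = fun t => ‖w t‖ ^ 2 := by
      funext t
      have := inner_self_eq_norm_sq (𝕜 := ℂ) (w t)
      simpa using this
    have h4 : ((inner (𝕜 := ℂ) (w t) (W t) : ℂ) + (inner (𝕜 := ℂ) (W t) (w t) : ℂ)).re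
        = 2 * D t := by
      rw [Complex.add_re, hD_def]
      have : (inner (𝕜 := ℂ) (W t) (w t) : ℂ) = (starRingEnd ℂ) (inner (𝕜 := ℂ) (w t) (W t)) :=
        (inner_conj_symm (𝕜 := ℂ) (W t) (w t)).symm
      rw [this, Complex.conj_re]
      ring
    rw [← h3, ← h4]
    exact h2
  -- fix t, proceed with the epsilon argument
  intro t hst
  have key : ∀ ε : ℝ, 0 < ε →
      ‖w t‖ ≤ (∫ τ in s..t, ‖f τ‖) + ε := by
    intro ε hε
    set ψ : ℝ → ℝ := fun t => Real.sqrt (‖w t‖ ^ 2 + ε ^ 2) with hψ_def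
    have hpos : ∀ t, 0 < ‖w t‖ ^ 2 + ε ^ 2 := fun t => by positivity
    have hψ_deriv : ∀ t, HasDerivAt ψ
        ((2 * D t) / (2 * Real.sqrt (‖w t‖ ^ 2 + ε ^ 2))) t := by
      intro t
      exact ((hg_deriv t).add_const (ε ^ 2)).sqrt (ne_of_gt (hpos t))
    have hwle : ∀ t, ‖w t‖ ≤ Real.sqrt (‖w t‖ ^ 2 + ε ^ 2) := by
      intro t
      rw [show (‖w t‖ : ℝ) = Real.sqrt (‖w t‖ ^ 2) from (Real.sqrt_sq (norm_nonneg _)).symm]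
      apply Real.sqrt_le_sqrt
      rw [Real.sq_sqrt (by positivity)]
      nlinarith
    have hψ_bound : ∀ t, (2 * D t) / (2 * Real.sqrt (‖w t‖ ^ 2 + ε ^ 2)) ≤ ‖f t‖ := by
      intro t
      have hs0 : 0 < Real.sqrt (‖w t‖ ^ 2 + ε ^ 2) := Real.sqrt_pos.mpr (hpos t)
      rw [div_le_iff₀ (by positivity)]
      have h1 := hkey t
      have h2 := hwle t
      nlinarith [norm_nonneg (f t)]
    set F : ℝ → ℝ := fun t => ∫ τ in s..t, ‖f τ‖ with hF_def
    have hF_deriv : ∀ t, HasDerivAt F (‖f t‖) t := fun t =>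
      (hf_cont.integral_hasStrictDerivAt s t).hasDerivAt
    set H : ℝ → ℝ := fun t => F t - ψ t with hH_def
    have hH_deriv : ∀ t, HasDerivAt H
        (‖f t‖ - (2 * D t) / (2 * Real.sqrt (‖w t‖ ^ 2 + ε ^ 2))) t :=
      fun t => (hF_deriv t).sub (hψ_deriv t)
    have hH_mono : Monotone H := by
      apply monotone_of_deriv_nonneg
      · exact fun t => (hH_deriv t).differentiableAt
      · intro t
        rw [(hH_deriv t).deriv]
        have := hψ_bound t
        linarith
    have h1 := hH_mono hst
    have hws : w s = 0 := by simp [hw_def, hvs]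
    have hψs : ψ s = ε := by
      simp [hψ_def, hws, Real.sqrt_sq hε.le]
    have hFs : F s = 0 := by simp [hF_def]
    have h2 : ‖w t‖ ≤ ψ t := hwle t
    have h3 : F s - ψ s ≤ F t - ψ t := h1
    rw [hFs, hψs] at h3
    have h4 : ψ t ≤ F t + ε := by linarith
    linarith
  exact le_of_forall_pos_le_add key
end

section
/- Let 𝓗 be a complex Hilbert space, let (P_N) be a sequence of orthogonal projections on 𝓗 (self-adjoint with P_N ∘ P_N = P_N) such that P_N x → x for every x ∈ 𝓗, and let A : ℝ → (𝓗 →L[ℂ] 𝓗) be continuous in operator norm with A t self-adjoint for every t. Let u : ℝ → 𝓗 be differentiable with u'(t) = −i • (A t)(u t) for all t, and for each N let v_N : ℝ → 𝓗 be differentiable with v_N'(t) = −i • (P_N ∘L (A t) ∘L P_N)(v_N t) for all t and v_N s = P_N (u s). Then for every compact interval [a,b] containing s, sup_{t ∈ [a,b]} ‖v_N t − u t‖ → 0 as N → ∞. -/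
open Filter Topology

section Aux

variable {𝓗 : Type*} [NormedAddCommGroup 𝓗] [InnerProductSpace ℂ 𝓗] [CompleteSpace 𝓗]

/-- An orthogonal projection (self-adjoint idempotent) is a contraction. -/
lemma proj_apply_norm_le (P : 𝓗 →L[ℂ] 𝓗) (hsa : IsSelfAdjoint P)
    (hid : P ∘L P = P) (x : 𝓗) : ‖P x‖ ≤ ‖x‖ := by
  have hadj : ContinuousLinearMap.adjoint P = P :=
    (ContinuousLinearMap.isSelfAdjoint_iff').1 hsa
  have h1 : (inner ℂ (P x) (P x) : ℂ) = inner ℂ x (P x) := by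
    calc (inner ℂ (P x) (P x) : ℂ)
        = inner ℂ ((ContinuousLinearMap.adjoint P) x) (P x) := by rw [hadj]
      _ = inner ℂ x (P (P x)) := ContinuousLinearMap.adjoint_inner_left _ _ _
      _ = inner ℂ x ((P ∘L P) x) := rfl
      _ = inner ℂ x (P x) := by rw [hid]
  have h2 : ‖P x‖ ^ 2 ≤ ‖x‖ * ‖P x‖ := by
    have e1 : RCLike.re (inner ℂ (P x) (P x) : ℂ) = ‖P x‖ ^ 2 := inner_self_eq_norm_sq (P x)
    have e2 : RCLike.re (inner ℂ x (P x) : ℂ) ≤ ‖(inner ℂ x (P x) : ℂ)‖ := RCLike.re_le_norm _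
    have e3 : ‖(inner ℂ x (P x) : ℂ)‖ ≤ ‖x‖ * ‖P x‖ := norm_inner_le_norm _ _
    rw [← e1, h1]
    exact e2.trans e3
  nlinarith [norm_nonneg (P x), norm_nonneg x]

/-- A pointwise convergent sequence of contractions converges uniformly on compact sets. -/
lemma proj_unif_on_compact (P : ℕ → 𝓗 →L[ℂ] 𝓗)
    (hPn : ∀ N x, ‖P N x‖ ≤ ‖x‖)
    (hPconv : ∀ x : 𝓗, Tendsto (fun N => P N x) atTop (𝓝 x))
    {K : Set 𝓗} (hK : IsCompact K) {ε : ℝ} (hε : 0 < ε) :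
    ∃ N₀, ∀ N ≥ N₀, ∀ x ∈ K, ‖P N x - x‖ ≤ ε := by
  obtain ⟨t, ht⟩ := hK.elim_finite_subcover (fun x : 𝓗 => Metric.ball x (ε / 4))
    (fun _ => Metric.isOpen_ball)
    (fun x hx => Set.mem_iUnion.2 ⟨x, Metric.mem_ball_self (by linarith)⟩)
  have hev : ∀ᶠ N in atTop, ∀ i ∈ t, ‖P N i - i‖ < ε / 2 := by
    rw [eventually_all_finset]
    intro i _
    have h0 : Tendsto (fun N => P N i - i) atTop (𝓝 (i - i)) :=
      (hPconv i).sub tendsto_const_nhds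
    rw [sub_self] at h0
    have h0' : Tendsto (fun N => ‖P N i - i‖) atTop (𝓝 0) := by
      simpa using h0.norm
    exact h0'.eventually (eventually_lt_nhds (by linarith))
  obtain ⟨N₀, hN₀⟩ := eventually_atTop.1 hev
  refine ⟨N₀, fun N hN x hx => ?_⟩
  obtain ⟨i, hi, hxi⟩ := Set.mem_iUnion₂.1 (ht hx)
  have hdist : ‖x - i‖ < ε / 4 := by
    rw [← dist_eq_norm]; exact Metric.mem_ball.1 hxi
  have heq : P N x - x = P N (x - i) + (P N i - i) + (i - x) := by
    rw [map_sub]; abel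
  calc ‖P N x - x‖ ≤ ‖P N (x - i)‖ + ‖P N i - i‖ + ‖i - x‖ := by
        rw [heq]; exact norm_add₃_le
    _ ≤ ‖x - i‖ + ‖P N i - i‖ + ‖i - x‖ :=
        add_le_add (add_le_add (hPn N _) le_rfl) le_rfl
    _ ≤ ε / 4 + ε / 2 + ε / 4 := by
        have h1 := hN₀ N hN i hi
        have h2 : ‖i - x‖ < ε / 4 := by rwa [norm_sub_rev]
        linarith
    _ = ε := by ring

lemma gronwallBound_mono_x {δ K ε : ℝ} (hδ : 0 ≤ δ) (hK : 0 < K) (hε : 0 ≤ ε)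
    {x y : ℝ} (hxy : x ≤ y) : gronwallBound δ K ε x ≤ gronwallBound δ K ε y := by
  rw [gronwallBound_of_K_ne_0 hK.ne']
  simp only
  have hexp : Real.exp (K * x) ≤ Real.exp (K * y) :=
    Real.exp_le_exp.2 (mul_le_mul_of_nonneg_left hxy hK.le)
  have hεK : 0 ≤ ε / K := div_nonneg hε hK.le
  nlinarith [Real.exp_pos (K * x)]

end Aux

/-- **Strong convergence of the spectral cut-off dynamics (bounded generators).**
Let `P N` be orthogonal projections converging strongly to the identity and
`A` a norm-continuous family of bounded self-adjoint operators.  If `u` solves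
`u' = -i A(t) u` and each `v N` solves the cut-off equation
`v' = -i (P N ∘ A(t) ∘ P N) v` with `v N s = P N (u s)`, then
`sup_{t ∈ [a,b]} ‖v N t - u t‖ → 0` for every compact interval `[a,b]`
containing `s`. -/
theorem strong_convergence_cutoff_dynamics
    {𝓗 : Type*} [NormedAddCommGroup 𝓗] [InnerProductSpace ℂ 𝓗] [CompleteSpace 𝓗]
    (P : ℕ → 𝓗 →L[ℂ] 𝓗)
    (hPsa : ∀ N, IsSelfAdjoint (P N)) (hPidem : ∀ N, (P N) ∘L (P N) = P N)
    (hPconv : ∀ x : 𝓗, Tendsto (fun N => P N x) atTop (𝓝 x))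
    (A : ℝ → 𝓗 →L[ℂ] 𝓗) (hA : Continuous A)
    (hsa : ∀ t, IsSelfAdjoint (A t))
    (u : ℝ → 𝓗) (s : ℝ)
    (hu : ∀ t, HasDerivAt u ((-Complex.I) • (A t) (u t)) t)
    (v : ℕ → ℝ → 𝓗)
    (hv : ∀ N t, HasDerivAt (v N) ((-Complex.I) • ((P N) ∘L (A t) ∘L (P N)) (v N t)) t)
    (hvs : ∀ N, v N s = P N (u s)) :
    ∀ a b : ℝ, a ≤ s → s ≤ b →
      Tendsto (fun N => sSup ((fun t => ‖v N t - u t‖) '' Set.Icc a b)) atTop (𝓝 0) := by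
  intro a b has hsb
  have hab : a ≤ b := has.trans hsb
  have hPn : ∀ N x, ‖P N x‖ ≤ ‖x‖ := fun N x =>
    proj_apply_norm_le (P N) (hPsa N) (hPidem N) x
  -- uniform bound on A on [a, b]
  obtain ⟨M₀, hM₀⟩ := (isCompact_Icc (a := a) (b := b)).exists_bound_of_continuousOn
    hA.continuousOn
  set M : ℝ := max M₀ 0 + 1 with hMdef
  have hM : 0 < M := by
    have : (0 : ℝ) ≤ max M₀ 0 := le_max_right _ _
    linarith
  have hAM : ∀ t ∈ Set.Icc a b, ‖A t‖ ≤ M := fun t ht => by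
    have h1 := hM₀ t ht
    have h2 : M₀ ≤ max M₀ 0 := le_max_left _ _
    linarith
  -- continuity of u
  have hudiff : Differentiable ℝ u := fun t => (hu t).differentiableAt
  have hucont : Continuous u := hudiff.continuous
  -- initial defect
  set δ : ℕ → ℝ := fun N => ‖P N (u s) - u s‖ with hδdef
  have hδ0 : Tendsto δ atTop (𝓝 0) := by
    have h := (hPconv (u s)).sub (tendsto_const_nhds (x := u s))
    rw [sub_self] at h
    simpa [hδdef] using h.norm
  -- the commutator defect
  set F : ℕ → ℝ → ℝ := fun N t => ‖((P N) ∘L (A t) ∘L (P N)) (u t) - (A t) (u t)‖ with hFdef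
  have hFcont : ∀ N, Continuous (F N) := by
    intro N
    apply Continuous.norm
    apply Continuous.sub
    · simp only [ContinuousLinearMap.comp_apply]
      exact (P N).continuous.comp (hA.clm_apply ((P N).continuous.comp hucont))
    · exact hA.clm_apply hucont
  set E : ℕ → ℝ := fun N => sSup (F N '' Set.Icc a b) with hEdef
  have hsmem : s ∈ Set.Icc a b := ⟨has, hsb⟩
  have hFle : ∀ N, ∀ t ∈ Set.Icc a b, F N t ≤ E N := fun N t ht =>
    le_csSup ((isCompact_Icc.image (hFcont N)).bddAbove) ⟨t, ht, rfl⟩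
  have hEnonneg : ∀ N, 0 ≤ E N := fun N =>
    le_trans (norm_nonneg _) (hFle N s hsmem)
  -- uniform smallness of the defect
  have hEsmall : ∀ ε : ℝ, 0 < ε → ∃ N₀, ∀ N ≥ N₀, ∀ t ∈ Set.Icc a b, F N t ≤ ε := by
    intro ε hε
    have hK1 : IsCompact (u '' Set.Icc a b) := isCompact_Icc.image hucont
    have hK2 : IsCompact ((fun t => A t (u t)) '' Set.Icc a b) :=
      isCompact_Icc.image (hA.clm_apply hucont)
    obtain ⟨N₁, hN₁⟩ := proj_unif_on_compact P hPn hPconv hK1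
      (ε := ε / (2 * M)) (by positivity)
    obtain ⟨N₂, hN₂⟩ := proj_unif_on_compact P hPn hPconv hK2
      (ε := ε / 2) (by positivity)
    refine ⟨max N₁ N₂, fun N hN t ht => ?_⟩
    have h1 : ‖P N (u t) - u t‖ ≤ ε / (2 * M) :=
      hN₁ N (le_trans (le_max_left _ _) hN) _ ⟨t, ht, rfl⟩
    have h2 : ‖P N (A t (u t)) - A t (u t)‖ ≤ ε / 2 :=
      hN₂ N (le_trans (le_max_right _ _) hN) _ ⟨t, ht, rfl⟩
    have heq : ((P N) ∘L (A t) ∘L (P N)) (u t) - (A t) (u t)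
        = (P N) ((A t) ((P N) (u t) - u t)) + ((P N) ((A t) (u t)) - (A t) (u t)) := by
      simp only [ContinuousLinearMap.comp_apply, map_sub]
      abel
    have hb1 : ‖(P N) ((A t) ((P N) (u t) - u t))‖ ≤ ε / 2 := by
      have c1 : ‖(P N) ((A t) ((P N) (u t) - u t))‖ ≤ ‖(A t) ((P N) (u t) - u t)‖ := hPn N _
      have c2 : ‖(A t) ((P N) (u t) - u t)‖ ≤ ‖A t‖ * ‖(P N) (u t) - u t‖ :=
        (A t).le_opNorm _
      have c3 : ‖A t‖ * ‖(P N) (u t) - u t‖ ≤ M * (ε / (2 * M)) :=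
        mul_le_mul (hAM t ht) h1 (norm_nonneg _) hM.le
      have c4 : M * (ε / (2 * M)) = ε / 2 := by field_simp
      linarith [c1, c2, c3.trans_eq c4]
    calc F N t ≤ ‖(P N) ((A t) ((P N) (u t) - u t))‖
          + ‖(P N) ((A t) (u t)) - (A t) (u t)‖ := by
          rw [hFdef]; simp only; rw [heq]; exact norm_add_le _ _
      _ ≤ ε / 2 + ε / 2 := add_le_add hb1 h2
      _ = ε := by ring
  have hE0 : Tendsto E atTop (𝓝 0) := by
    rw [Metric.tendsto_atTop]
    intro η hη
    obtain ⟨N₀, hN₀⟩ := hEsmall (η / 2) (by linarith)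
    refine ⟨N₀, fun N hN => ?_⟩
    rw [Real.dist_eq, sub_zero, abs_of_nonneg (hEnonneg N)]
    have hle : E N ≤ η / 2 :=
      Real.sSup_le (by rintro x ⟨t, ht, rfl⟩; exact hN₀ N hN t ht) (by linarith)
    linarith
  -- Grönwall bound for each N
  have hgron : ∀ N, ∀ t ∈ Set.Icc a b,
      ‖v N t - u t‖ ≤ gronwallBound (δ N) M (E N) (b - a) := by
    intro N
    set w : ℝ → 𝓗 := fun t => v N t - u t with hwdef
    set w' : ℝ → 𝓗 := fun t =>
      (-Complex.I) • ((P N) ∘L (A t) ∘L (P N)) (v N t) - (-Complex.I) • (A t) (u t) with hw'def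
    have hw : ∀ t, HasDerivAt w (w' t) t := fun t => (hv N t).sub (hu t)
    have hwdiff : Differentiable ℝ w := fun t => (hw t).differentiableAt
    have hwc : Continuous w := hwdiff.continuous
    have hws : ‖w s‖ = δ N := by simp [hwdef, hδdef, hvs N]
    have hbound : ∀ t ∈ Set.Icc a b, ‖w' t‖ ≤ M * ‖w t‖ + E N := by
      intro t ht
      have h2 : ‖w' t‖ = ‖((P N) ∘L (A t) ∘L (P N)) (v N t) - (A t) (u t)‖ := by
        rw [hw'def]
        simp only
        rw [← smul_sub, norm_smul]
        simp
      have h3 : ((P N) ∘L (A t) ∘L (P N)) (v N t) - (A t) (u t)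
          = ((P N) ∘L (A t) ∘L (P N)) (w t)
            + (((P N) ∘L (A t) ∘L (P N)) (u t) - (A t) (u t)) := by
        rw [hwdef]
        simp only [map_sub]
        abel
      have h4 : ‖((P N) ∘L (A t) ∘L (P N)) (w t)‖ ≤ M * ‖w t‖ := by
        simp only [ContinuousLinearMap.comp_apply]
        calc ‖P N (A t (P N (w t)))‖ ≤ ‖A t (P N (w t))‖ := hPn N _
          _ ≤ ‖A t‖ * ‖P N (w t)‖ := (A t).le_opNorm _
          _ ≤ M * ‖w t‖ := mul_le_mul (hAM t ht) (hPn N _) (norm_nonneg _) hM.le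
      calc ‖w' t‖ = ‖((P N) ∘L (A t) ∘L (P N)) (v N t) - (A t) (u t)‖ := h2
        _ ≤ ‖((P N) ∘L (A t) ∘L (P N)) (w t)‖
            + ‖((P N) ∘L (A t) ∘L (P N)) (u t) - (A t) (u t)‖ := by
            rw [h3]; exact norm_add_le _ _
        _ ≤ M * ‖w t‖ + E N := add_le_add h4 (hFle N t ht)
    -- forward Grönwall on [s, b]
    have hfwd : ∀ t ∈ Set.Icc s b, ‖w t‖ ≤ gronwallBound (δ N) M (E N) (t - s) := by
      apply norm_le_gronwallBound_of_norm_deriv_right_le hwc.continuousOn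
        (fun x _ => (hw x).hasDerivWithinAt) hws.le
      intro x hx
      exact hbound x ⟨has.trans hx.1, hx.2.le⟩
    -- backward Grönwall via time reversal
    have hbwd : ∀ t ∈ Set.Icc a s, ‖w t‖ ≤ gronwallBound (δ N) M (E N) (s - t) := by
      intro t ht
      set g : ℝ → 𝓗 := fun τ => w (2 * s - τ) with hgdef
      have hg : ∀ τ, HasDerivAt g ((-1 : ℝ) • w' (2 * s - τ)) τ := by
        intro τ
        have hl : HasDerivAt (fun τ : ℝ => 2 * s - τ) (-1) τ := by
          simpa using (hasDerivAt_id τ).const_sub (2 * s)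
        exact (hw (2 * s - τ)).scomp τ hl
      have hgc : Continuous g := hwc.comp (continuous_const.sub continuous_id)
      have hgs : ‖g s‖ = δ N := by
        rw [hgdef]
        simp only
        rw [show 2 * s - s = s by ring, hws]
      have hres : ∀ x ∈ Set.Icc s (2 * s - a),
          ‖g x‖ ≤ gronwallBound (δ N) M (E N) (x - s) := by
        apply norm_le_gronwallBound_of_norm_deriv_right_le hgc.continuousOn
          (fun x _ => (hg x).hasDerivWithinAt) hgs.le
        intro x hx
        have hmem : 2 * s - x ∈ Set.Icc a b := by
          constructor
          · have := hx.2.le; linarith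
          · have := hx.1; linarith
        have := hbound (2 * s - x) hmem
        calc ‖(-1 : ℝ) • w' (2 * s - x)‖ = ‖w' (2 * s - x)‖ := by
              rw [norm_smul]; simp
          _ ≤ M * ‖w (2 * s - x)‖ + E N := this
          _ = M * ‖g x‖ + E N := rfl
      have hx : 2 * s - t ∈ Set.Icc s (2 * s - a) :=
        ⟨by linarith [ht.2], by linarith [ht.1]⟩
      have hfin := hres (2 * s - t) hx
      have hgt : g (2 * s - t) = w t := by
        rw [hgdef]; simp only; rw [show 2 * s - (2 * s - t) = t by ring]
      rw [hgt, show 2 * s - t - s = s - t by ring] at hfin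
      exact hfin
    intro t ht
    rcases le_total t s with h | h
    · refine (hbwd t ⟨ht.1, h⟩).trans
        (gronwallBound_mono_x (norm_nonneg _) hM (hEnonneg N) ?_)
      linarith [ht.1]
    · refine (hfwd t ⟨h, ht.2⟩).trans
        (gronwallBound_mono_x (norm_nonneg _) hM (hEnonneg N) ?_)
      linarith [ht.2]
  -- pass to the limit
  have hC : Tendsto (fun N => gronwallBound (δ N) M (E N) (b - a)) atTop (𝓝 0) := by
    simp only [gronwallBound_of_K_ne_0 hM.ne']
    have h := (hδ0.mul_const (Real.exp (M * (b - a)))).add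
      ((hE0.div_const M).mul_const (Real.exp (M * (b - a)) - 1))
    simpa using h
  apply squeeze_zero
  · intro N
    exact Real.sSup_nonneg (by rintro x ⟨t, ht, rfl⟩; exact norm_nonneg _)
  · intro N
    apply Real.sSup_le
    · rintro x ⟨t, ht, rfl⟩
      exact hgron N t ht
    · exact le_trans (norm_nonneg _) (hgron N s hsmem)
  · exact hC
end

section
/- Let 𝓗 be a complex Hilbert space, let W : 𝓗 →L[ℂ] 𝓗 be self-adjoint with Re⟪W x, x⟫ ≥ 0 for all x, let B : ℝ → (𝓗 →L[ℂ] 𝓗) be continuous with B t self-adjoint for every t, and let C ≥ 0 be a constant such that |⟪(W ∘L (B t) − (B t) ∘L W) x, x⟫| ≤ C · Re⟪W x, x⟫ for all x ∈ 𝓗 and all t. If v : ℝ → 𝓗 is differentiable with v'(t) = −i • (B t)(v t) for all t, then for all s, t ∈ ℝ, Re⟪W (v t), v t⟫ ≤ exp(C·|t − s|) · Re⟪W (v s), v s⟫. -/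
open Filter Topology

local notation "⟪" x ", " y "⟫" => @inner ℂ _ _ x y

/-- Abstract Gronwall: if `f` has derivative `φ` with `|φ t| ≤ C * f t`, then
`f t ≤ exp (C * |t - s|) * f s`. -/
theorem gronwall_aux (f φ : ℝ → ℝ) (hf : ∀ t, HasDerivAt f (φ t) t)
    (C : ℝ) (hC : 0 ≤ C) (hb : ∀ t, |φ t| ≤ C * f t) :
    ∀ s t : ℝ, f t ≤ Real.exp (C * |t - s|) * f s := by
  intro s t
  rcases le_total s t with h | h
  · rw [abs_of_nonneg (by linarith)]
    set F : ℝ → ℝ := fun u => Real.exp (-C * u) * f u with hF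
    have hF' : ∀ u, HasDerivAt F (Real.exp (-C * u) * (φ u - C * f u)) u := by
      intro u
      have h1 : HasDerivAt (fun u => Real.exp (-C * u)) (Real.exp (-C * u) * (-C)) u := by
        simpa using ((hasDerivAt_id u).const_mul (-C)).exp
      have := h1.mul (hf u)
      exact this.congr_deriv (by ring)
    have hanti : Antitone F := by
      apply antitone_of_deriv_nonpos
      · exact fun u => (hF' u).differentiableAt
      · intro u
        rw [(hF' u).deriv]
        have : φ u ≤ C * f u := (abs_le.mp (hb u)).2
        have := Real.exp_pos (-C * u)
        nlinarith
    have hFts : F t ≤ F s := hanti h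
    have hexp : (0:ℝ) < Real.exp (-C * t) := Real.exp_pos _
    have := hFts
    simp only [hF] at this
    calc f t = Real.exp (C * t) * (Real.exp (-C * t) * f t) := by
            rw [← mul_assoc, ← Real.exp_add]; simp
      _ ≤ Real.exp (C * t) * (Real.exp (-C * s) * f s) := by
            apply mul_le_mul_of_nonneg_left this (Real.exp_pos _).le
      _ = Real.exp (C * (t - s)) * f s := by
            rw [← mul_assoc, ← Real.exp_add]; ring_nf
  · rw [abs_of_nonpos (by linarith)]
    set F : ℝ → ℝ := fun u => Real.exp (C * u) * f u with hF
    have hF' : ∀ u, HasDerivAt F (Real.exp (C * u) * (φ u + C * f u)) u := by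
      intro u
      have h1 : HasDerivAt (fun u => Real.exp (C * u)) (Real.exp (C * u) * C) u := by
        simpa using ((hasDerivAt_id u).const_mul C).exp
      have := h1.mul (hf u)
      exact this.congr_deriv (by ring)
    have hmono : Monotone F := by
      apply monotone_of_deriv_nonneg
      · exact fun u => (hF' u).differentiableAt
      · intro u
        rw [(hF' u).deriv]
        have : -(C * f u) ≤ φ u := (abs_le.mp (hb u)).1
        have := Real.exp_pos (C * u)
        nlinarith
    have hFts : F t ≤ F s := hmono h
    simp only [hF] at hFts
    calc f t = Real.exp (-(C * t)) * (Real.exp (C * t) * f t) := by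
            rw [← mul_assoc, ← Real.exp_add]; simp
      _ ≤ Real.exp (-(C * t)) * (Real.exp (C * s) * f s) := by
            apply mul_le_mul_of_nonneg_left hFts (Real.exp_pos _).le
      _ = Real.exp (C * -(t - s)) * f s := by
            rw [← mul_assoc, ← Real.exp_add]; ring_nf

/-- **Commutator criterion for cut-off stability (Gronwall estimate).**
Let `W` be a bounded self-adjoint nonnegative operator and `B` a continuous
family of bounded self-adjoint operators such that
`|⟪[W, B t] x, x⟫| ≤ C · Re ⟪W x, x⟫` for all `x` and `t`.  Then every solution
of `v' = -i B(t) v` satisfies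
`Re ⟪W (v t), v t⟫ ≤ exp(C |t - s|) · Re ⟪W (v s), v s⟫`. -/
theorem commutator_criterion_stability
    {𝓗 : Type*} [NormedAddCommGroup 𝓗] [InnerProductSpace ℂ 𝓗] [CompleteSpace 𝓗]
    (W : 𝓗 →L[ℂ] 𝓗) (hWsa : IsSelfAdjoint W)
    (hWpos : ∀ x : 𝓗, 0 ≤ (⟪W x, x⟫).re)
    (B : ℝ → 𝓗 →L[ℂ] 𝓗) (hB : Continuous B)
    (hsa : ∀ t, IsSelfAdjoint (B t))
    (C : ℝ) (hC : 0 ≤ C)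
    (hcomm : ∀ (x : 𝓗) (t : ℝ),
      ‖⟪(W ∘L (B t) - (B t) ∘L W) x, x⟫‖ ≤ C * (⟪W x, x⟫).re)
    (v : ℝ → 𝓗)
    (hv : ∀ t, HasDerivAt v ((-Complex.I) • (B t) (v t)) t) :
    ∀ s t : ℝ,
      (⟪W (v t), v t⟫).re ≤ Real.exp (C * |t - s|) * (⟪W (v s), v s⟫).re := by
  set f : ℝ → ℝ := fun t => (⟪W (v t), v t⟫).re with hfdef
  set φ : ℝ → ℝ := fun t =>
    (⟪W (v t), (-Complex.I) • (B t) (v t)⟫ + ⟪W ((-Complex.I) • (B t) (v t)), v t⟫).re with hφdef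
  have hf : ∀ t, HasDerivAt f (φ t) t := by
    intro t
    have h1 : HasDerivAt (fun u => W (v u)) (W ((-Complex.I) • (B t) (v t))) t := by
      simpa [Function.comp_def] using ((W.restrictScalars ℝ).hasFDerivAt (x := v t)).comp_hasDerivAt t (hv t)
    have h2 := HasDerivAt.inner (𝕜 := ℂ) h1 (hv t)
    exact Complex.reCLM.hasFDerivAt.comp_hasDerivAt t h2
  have hb : ∀ t, |φ t| ≤ C * f t := by
    intro t
    set x := v t
    have hkey : (⟪W x, (-Complex.I) • (B t) x⟫ + ⟪W ((-Complex.I) • (B t) x), x⟫)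
        = Complex.I * ⟪(W ∘L (B t) - (B t) ∘L W) x, x⟫ := by
      have hWB : ⟪W x, (B t) x⟫ = ⟪(B t) (W x), x⟫ := by
        rw [← ContinuousLinearMap.adjoint_inner_left (B t) x (W x), (hsa t).adjoint_eq]
      rw [map_smul]
      rw [inner_smul_right, inner_smul_left]
      simp only [ContinuousLinearMap.sub_apply, ContinuousLinearMap.comp_apply, inner_sub_left]
      rw [hWB]
      simp [Complex.conj_I]
      ring
    have : |φ t| ≤ ‖Complex.I * ⟪(W ∘L (B t) - (B t) ∘L W) x, x⟫‖ := by
      rw [hφdef]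
      simp only
      rw [hkey]
      exact Complex.abs_re_le_norm _
    rw [norm_mul, Complex.norm_I, one_mul] at this
    exact this.trans (hcomm x t)
  exact gronwall_aux f φ hf C hC hb
end

section
/- Let 𝓗 be a complex Hilbert space, let (P_N) be a sequence of continuous linear maps with ‖P_N‖ ≤ 1 for every N and P_N x → x for every x ∈ 𝓗, and let A : ℝ → (𝓗 →L[ℂ] 𝓗) be continuous in operator norm. Fix m ≥ 1 and u ∈ 𝓗. For times t = (t_1,…,t_m) ∈ [0,1]^m define the word W(t) = (A t_m) ∘L ⋯ ∘L (A t_1) and the cut-off word W_N(t) = P_N ∘L (A t_m) ∘L P_N ∘L (A t_{m−1}) ∘L P_N ∘L ⋯ ∘L P_N ∘L (A t_1) ∘L P_N. Then sup_{t ∈ [0,1]^m} ‖W_N(t) u − W(t) u‖ → 0 as N → ∞. -/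
open Filter Topology

lemma contract_unif {𝓗 : Type*} [NormedAddCommGroup 𝓗] [NormedSpace ℂ 𝓗]
    (P : ℕ → 𝓗 →L[ℂ] 𝓗) (hP : ∀ N, ‖P N‖ ≤ 1)
    (hPconv : ∀ x : 𝓗, Tendsto (fun N => P N x) atTop (𝓝 x))
    {K : Set 𝓗} (hK : IsCompact K) :
    TendstoUniformlyOn (fun N v => P N v) id atTop K := by
  rw [Metric.tendstoUniformlyOn_iff]
  intro ε hε
  obtain ⟨t, htfin, htcov⟩ := (Metric.totallyBounded_iff.mp hK.totallyBounded) (ε/3) (by positivity)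
  have hev : ∀ᶠ N in atTop, ∀ y ∈ t, dist (P N y) y < ε/3 := by
    rw [Filter.eventually_all_finite htfin]
    intro y _
    exact Metric.tendsto_nhds.mp (hPconv y) (ε/3) (by positivity)
  filter_upwards [hev] with N hN v hv
  obtain ⟨y, hyt, hvy⟩ := Set.mem_iUnion₂.mp (htcov hv)
  have h1 : dist v y < ε/3 := Metric.mem_ball.mp hvy
  have h3 : dist (P N y) (P N v) ≤ dist y v := by
    have := (P N).le_opNorm (y - v)
    simpa [dist_eq_norm, (P N).map_sub] using
      this.trans (by nlinarith [norm_nonneg (y - v), hP N])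
  calc dist (id v) (P N v) ≤ dist v y + dist y (P N y) + dist (P N y) (P N v) :=
        dist_triangle4 _ _ _ _
    _ ≤ dist v y + dist y (P N y) + dist y v := by linarith
    _ < ε := by rw [dist_comm y (P N y)] at *; rw [dist_comm y v]; linarith [hN y hyt]

lemma step_unif {𝓗 : Type*} [NormedAddCommGroup 𝓗] [NormedSpace ℂ 𝓗]
    (P : ℕ → 𝓗 →L[ℂ] 𝓗) (hP : ∀ N, ‖P N‖ ≤ 1)
    (hPconv : ∀ x : 𝓗, Tendsto (fun N => P N x) atTop (𝓝 x))
    {X : Type*} [TopologicalSpace X] {K : Set X} (hK : IsCompact K)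
    {g : ℕ → X → 𝓗} {g0 : X → 𝓗} (hg : TendstoUniformlyOn g g0 atTop K)
    (hg0 : ContinuousOn g0 K) {B : X → 𝓗 →L[ℂ] 𝓗} (hB : Continuous B) :
    TendstoUniformlyOn (fun N t => P N (B t (g N t))) (fun t => B t (g0 t)) atTop K := by
  obtain ⟨C, hC⟩ := hK.exists_bound_of_continuousOn hB.continuousOn
  set C' : ℝ := max C 1 with hC'
  have hC'pos : 0 < C' := lt_of_lt_of_le one_pos (le_max_right _ _)
  have hK' : IsCompact ((fun t => B t (g0 t)) '' K) :=
    hK.image_of_continuousOn (hB.continuousOn.clm_apply hg0)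
  have hPu := contract_unif P hP hPconv hK'
  rw [Metric.tendstoUniformlyOn_iff] at hg hPu ⊢
  intro ε hε
  filter_upwards [hg (ε / (2 * C')) (by positivity), hPu (ε / 2) (by positivity)]
    with N h1 h2 t ht
  have hv := h2 (B t (g0 t)) (Set.mem_image_of_mem _ ht)
  have h1t := h1 t ht
  have key : dist (B t (g0 t)) (P N (B t (g N t))) ≤
      dist (B t (g0 t)) (P N (B t (g0 t))) + ‖B t (g0 t) - B t (g N t)‖ := by
    refine (dist_triangle _ (P N (B t (g0 t))) _).trans ?_
    gcongr
    have : dist (P N (B t (g0 t))) (P N (B t (g N t))) ≤ ‖P N‖ * ‖B t (g0 t) - B t (g N t)‖ := by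
      simpa [dist_eq_norm, (P N).map_sub] using (P N).le_opNorm (B t (g0 t) - B t (g N t))
    refine this.trans ?_
    nlinarith [norm_nonneg (B t (g0 t) - B t (g N t)), hP N]
  have hBnorm : ‖B t (g0 t) - B t (g N t)‖ ≤ C' * dist (g0 t) (g N t) := by
    rw [← (B t).map_sub]
    refine ((B t).le_opNorm _).trans ?_
    rw [dist_eq_norm]
    have := norm_nonneg (g0 t - g N t)
    nlinarith [hC t ht, le_max_left C 1]
  have hmul : C' * dist (g0 t) (g N t) < C' * (ε / (2 * C')) :=
    (mul_lt_mul_iff_right₀ hC'pos).mpr h1t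
  have heq : C' * (ε / (2 * C')) = ε / 2 := by field_simp
  calc dist (B t (g0 t)) (P N (B t (g N t))) ≤ _ + _ := key
    _ < ε / 2 + ε / 2 := by
        rw [Function.id_def] at hv
        apply add_lt_add hv
        calc ‖B t (g0 t) - B t (g N t)‖ ≤ C' * dist (g0 t) (g N t) := hBnorm
          _ < ε/2 := by rw [← heq]; exact hmul
    _ = ε := by ring

lemma word_cont {𝓗 : Type*} [NormedAddCommGroup 𝓗] [NormedSpace ℂ 𝓗]
    {X : Type*} [TopologicalSpace X] (L : List (X → 𝓗 →L[ℂ] 𝓗))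
    (hL : ∀ B ∈ L, Continuous B) :
    Continuous fun t => ((L.map (fun f : X → 𝓗 →L[ℂ] 𝓗 => f t)).reverse.prod : 𝓗 →L[ℂ] 𝓗) := by
  induction L with
  | nil => simpa using continuous_const
  | cons B L ih =>
    simp only [List.map_cons, List.reverse_cons, List.prod_append, List.prod_cons,
      List.prod_nil, mul_one]
    exact (ih fun C hC => hL C (List.mem_cons_of_mem _ hC)).mul (hL B (List.mem_cons_self))

lemma word_unif {𝓗 : Type*} [NormedAddCommGroup 𝓗] [NormedSpace ℂ 𝓗]
    (P : ℕ → 𝓗 →L[ℂ] 𝓗) (hP : ∀ N, ‖P N‖ ≤ 1)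
    (hPconv : ∀ x : 𝓗, Tendsto (fun N => P N x) atTop (𝓝 x))
    {X : Type*} [TopologicalSpace X] {K : Set X} (hK : IsCompact K) (u : 𝓗)
    (L : List (X → 𝓗 →L[ℂ] 𝓗)) (hL : ∀ B ∈ L, Continuous B) :
    TendstoUniformlyOn (fun N t => (P N * (L.map (fun f : X → 𝓗 →L[ℂ] 𝓗 => f t * P N)).reverse.prod) u)
      (fun t => ((L.map (fun f : X → 𝓗 →L[ℂ] 𝓗 => f t)).reverse.prod) u) atTop K := by
  induction L using List.reverseRecOn with
  | nil =>
    simp only [List.map_nil, List.reverse_nil, List.prod_nil, mul_one,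
      ContinuousLinearMap.one_apply]
    rw [Metric.tendstoUniformlyOn_iff]
    intro ε hε
    filter_upwards [Metric.tendsto_nhds.mp (hPconv u) ε hε] with N h t _
    simpa [dist_comm] using h
  | append_singleton L B ih =>
    have hL' : ∀ C ∈ L, Continuous C := fun C hC => hL C (List.mem_append_left _ hC)
    have hB : Continuous B := hL B (List.mem_append_right _ (List.mem_cons_self))
    have hcut : ∀ (N : ℕ) (t : X),
        (P N * (((L ++ [B]).map (fun f : X → 𝓗 →L[ℂ] 𝓗 => f t * P N)).reverse.prod)) u =
        P N ((B t) ((P N * ((L.map (fun f : X → 𝓗 →L[ℂ] 𝓗 => f t * P N)).reverse.prod)) u)) := by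
      intro N t
      simp [List.map_append, List.reverse_append, ContinuousLinearMap.mul_apply]
    have huncut : ∀ t : X,
        (((L ++ [B]).map (fun f : X → 𝓗 →L[ℂ] 𝓗 => f t)).reverse.prod) u = (B t) (((L.map (fun f : X → 𝓗 →L[ℂ] 𝓗 => f t)).reverse.prod) u) := by
      intro t
      simp [List.map_append, List.reverse_append, ContinuousLinearMap.mul_apply]
    simp only [hcut, huncut]
    exact step_unif P hP hPconv hK (ih hL')
      ((word_cont L hL').clm_apply continuous_const).continuousOn hB

/-- **Convergence of cut-off words.**
Let `P N` be contractions converging strongly to the identity and `A` a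
norm-continuous family of bounded operators.  For `m ≥ 1`, time tuples
`t ∈ [0,1]^m`, the cut-off word
`P_N ∘ A(t_m) ∘ P_N ∘ ⋯ ∘ P_N ∘ A(t_1) ∘ P_N` applied to a fixed vector `u`
converges to the uncut word `A(t_m) ∘ ⋯ ∘ A(t_1)` applied to `u`, uniformly for
`t` in the cube. -/
theorem cutoff_word_convergence
    {𝓗 : Type*} [NormedAddCommGroup 𝓗] [InnerProductSpace ℂ 𝓗] [CompleteSpace 𝓗]
    (P : ℕ → 𝓗 →L[ℂ] 𝓗)
    (hP : ∀ N, ‖P N‖ ≤ 1)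
    (hPconv : ∀ x : 𝓗, Tendsto (fun N => P N x) atTop (𝓝 x))
    (A : ℝ → 𝓗 →L[ℂ] 𝓗) (hA : Continuous A)
    (m : ℕ) (hm : 1 ≤ m) (u : 𝓗) :
    Tendsto
      (fun N => sSup ((fun t : Fin m → ℝ =>
        ‖(P N * (List.ofFn fun i : Fin m => A (t i) * P N).reverse.prod) u -
          ((List.ofFn fun i : Fin m => A (t i)).reverse.prod) u‖) ''
        Set.Icc (0 : Fin m → ℝ) 1))
      atTop (𝓝 0) := by
  set L : List ((Fin m → ℝ) → 𝓗 →L[ℂ] 𝓗) :=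
    List.ofFn (fun (i : Fin m) (t : Fin m → ℝ) => A (t i)) with hLdef
  have hL : ∀ B ∈ L, Continuous B := by
    intro B hB
    rw [hLdef, List.mem_ofFn] at hB
    obtain ⟨i, rfl⟩ := hB
    exact hA.comp (continuous_apply i)
  have hmap1 : ∀ (N : ℕ) (t : Fin m → ℝ),
      L.map (fun f : (Fin m → ℝ) → 𝓗 →L[ℂ] 𝓗 => f t * P N) =
        List.ofFn (fun i : Fin m => A (t i) * P N) := by
    intro N t; simp [hLdef, List.map_ofFn, Function.comp_def]
  have hmap2 : ∀ t : Fin m → ℝ,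
      L.map (fun f : (Fin m → ℝ) → 𝓗 →L[ℂ] 𝓗 => f t) =
        List.ofFn (fun i : Fin m => A (t i)) := by
    intro t; simp [hLdef, List.map_ofFn, Function.comp_def]
  have huni := word_unif P hP hPconv (isCompact_Icc (a := (0 : Fin m → ℝ)) (b := 1)) u L hL
  rw [Metric.tendstoUniformlyOn_iff] at huni
  rw [Metric.tendsto_nhds]
  intro ε hε
  filter_upwards [huni (ε / 2) (by positivity)] with N hN
  have hnonneg : (0:ℝ) ≤ sSup ((fun t : Fin m → ℝ =>
        ‖(P N * (List.ofFn fun i : Fin m => A (t i) * P N).reverse.prod) u -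
          ((List.ofFn fun i : Fin m => A (t i)).reverse.prod) u‖) ''
        Set.Icc (0 : Fin m → ℝ) 1) := by
    apply Real.sSup_nonneg
    rintro x ⟨t, _, rfl⟩
    exact norm_nonneg _
  have hle : sSup ((fun t : Fin m → ℝ =>
        ‖(P N * (List.ofFn fun i : Fin m => A (t i) * P N).reverse.prod) u -
          ((List.ofFn fun i : Fin m => A (t i)).reverse.prod) u‖) ''
        Set.Icc (0 : Fin m → ℝ) 1) ≤ ε / 2 := by
    apply Real.sSup_le _ (by positivity)
    rintro x ⟨t, ht, rfl⟩
    have := hN t ht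
    dsimp only
    rw [← hmap1 N t, ← hmap2 t]
    rw [dist_eq_norm] at this
    calc ‖_ - _‖ = ‖_‖ := norm_sub_rev _ _
      _ ≤ ε / 2 := le_of_lt this
  rw [Real.dist_eq, sub_zero, abs_of_nonneg hnonneg]
  linarith
end
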